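/- If A is an M×N real matrix with Spark(A) = L+1, then for every p ∈ [0,1] and every k ≤ L, the null space constant γ(ℓ_p, A, k) is finite. -/

import Mathlib

open Finset MeasureTheory Filter

/-- `phi p x = |x|^p`, with the convention `|x|^0 = 1` for `x ≠ 0` and `phi p 0 = 0`. -/
noncomputable def phi (p x : ℝ) : ℝ := if x = 0 then 0 else |x| ^ p

open Classical in
/-- support of a vector, as a finset -/
noncomputable def supp {n : ℕ} (z : Fin n → ℝ) : Finset (Fin n) :=
  Finset.univ.filter (fun i => z i ≠ 0)

/-- `Spark(A) = s`: some `s` columns are linearly dependent (a kernel vector with support of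
size `s`), and every nonzero kernel vector has support of size at least `s`. -/
def sparkEq {m n : ℕ} (A : Matrix (Fin m) (Fin n) ℝ) (s : ℕ) : Prop :=
  (∃ z, A.mulVec z = 0 ∧ z ≠ 0 ∧ (supp z).card = s) ∧
  (∀ z, A.mulVec z = 0 → z ≠ 0 → s ≤ (supp z).card)

/-- The set of constants `γ` satisfying the null space property inequality at level `k`. -/
def validNSC {m n : ℕ} (A : Matrix (Fin m) (Fin n) ℝ) (p : ℝ) (k : ℕ) : Set ℝ :=
  {γ | ∀ S : Finset (Fin n), S.card ≤ k → ∀ z, A.mulVec z = 0 →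
    ∑ i ∈ S, phi p (z i) ≤ γ * ∑ i ∈ Sᶜ, phi p (z i)}

/-- The null space constant `γ(ℓ_p, A, k)`: the smallest valid constant. -/
noncomputable def gammaNSC {m n : ℕ} (A : Matrix (Fin m) (Fin n) ℝ) (p : ℝ) (k : ℕ) : ℝ :=
  sInf (validNSC A p k)

/-- The ratio `θ(p, z, S)`. -/
noncomputable def theta {n : ℕ} (p : ℝ) (z : Fin n → ℝ) (S : Finset (Fin n)) : ℝ :=
  (∑ i ∈ S, phi p (z i)) / (∑ i ∈ Sᶜ, phi p (z i))

lemma phi_nonneg (p x : ℝ) : 0 ≤ phi p x := by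
  unfold phi; split
  · exact le_refl 0
  · exact Real.rpow_nonneg (abs_nonneg x) p

lemma phi_pos (p : ℝ) {x : ℝ} (hx : x ≠ 0) : 0 < phi p x := by
  unfold phi; rw [if_neg hx]; exact Real.rpow_pos_of_pos (abs_pos.2 hx) p

lemma phi_le_one {p x : ℝ} (hp : 0 ≤ p) (hx : |x| ≤ 1) : phi p x ≤ 1 := by
  unfold phi; split
  · norm_num
  · exact Real.rpow_le_one (abs_nonneg x) hx hp

lemma phi_eq {p : ℝ} (hp : p ≠ 0) (x : ℝ) : phi p x = |x| ^ p := by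
  unfold phi
  split
  · subst ‹x = 0›; simp [Real.zero_rpow hp]
  · rfl

lemma phi_smul (p : ℝ) {c : ℝ} (hc : c ≠ 0) (x : ℝ) :
    phi p (c * x) = |c| ^ p * phi p x := by
  unfold phi
  rcases eq_or_ne x 0 with rfl | hx
  · simp
  · rw [if_neg hx, if_neg (mul_ne_zero hc hx), abs_mul,
      Real.mul_rpow (abs_nonneg c) (abs_nonneg x)]

lemma supp_exists {n : ℕ} {z : Fin n → ℝ} (S : Finset (Fin n))
    (h : S.card < (supp z).card) : ∃ i, z i ≠ 0 ∧ i ∉ S := by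
  classical
  by_contra hcon
  push_neg at hcon
  have hsub : supp z ⊆ S := by
    intro i hi
    simp only [supp, Finset.mem_filter] at hi
    exact hcon i hi.2
  exact absurd (Finset.card_le_card hsub) (not_le.2 h)

/-- if Spark(A) = L+1, then for p ∈ [0,1] and k ≤ L the null space constant
is finite, i.e. some finite constant satisfies the null space property inequality. -/
theorem stmt1 {M N L : ℕ} (A : Matrix (Fin M) (Fin N) ℝ) (hspark : sparkEq A (L + 1))
    (p : ℝ) (hp : p ∈ Set.Icc (0 : ℝ) 1) (k : ℕ) (hk : k ≤ L) :
    (validNSC A p k).Nonempty := by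
  classical
  obtain ⟨⟨z₀, hz₀A, hz₀ne, hz₀card⟩, hmin⟩ := hspark
  rcases eq_or_lt_of_le hp.1 with hp0 | hp0
  · -- case p = 0
    subst hp0
    refine ⟨(k : ℝ), ?_⟩
    intro S hS z hz
    rcases eq_or_ne z 0 with rfl | hzne
    · simp [phi]
    · have hcard : k < (supp z).card :=
        lt_of_lt_of_le (Nat.lt_succ_of_le hk) (hmin z hz hzne)
      obtain ⟨i, hi, hiS⟩ := supp_exists S (lt_of_le_of_lt hS hcard)
      have h1 : (1 : ℝ) ≤ ∑ j ∈ Sᶜ, phi 0 (z j) := by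
        have hsum := Finset.single_le_sum (f := fun j => phi 0 (z j))
          (fun j _ => phi_nonneg 0 (z j)) (Finset.mem_compl.2 hiS)
        have hphi : phi 0 (z i) = 1 := by
          unfold phi; rw [if_neg hi]; simp
        linarith
      have hle1 : ∀ x : ℝ, phi 0 x ≤ 1 := by
        intro x; unfold phi; split
        · norm_num
        · simp
      have h2 : ∑ j ∈ S, phi 0 (z j) ≤ (S.card : ℝ) := by
        calc ∑ j ∈ S, phi 0 (z j) ≤ ∑ j ∈ S, 1 :=
              Finset.sum_le_sum fun j _ => hle1 (z j)
          _ = (S.card : ℝ) := by simp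
      have h3 : (S.card : ℝ) ≤ (k : ℝ) := by exact_mod_cast hS
      have hk0 : (0 : ℝ) ≤ (k : ℝ) := Nat.cast_nonneg k
      nlinarith
  · -- case p > 0
    have hpne : p ≠ 0 := ne_of_gt hp0
    set K : Set (Fin N → ℝ) := {z | A.mulVec z = 0} ∩ Metric.sphere 0 1 with hKdef
    have hKcl : IsClosed {z : Fin N → ℝ | A.mulVec z = 0} := by
      have hcont : Continuous fun z : Fin N → ℝ => A.mulVec z :=
        A.mulVecLin.continuous_of_finiteDimensional
      exact isClosed_eq hcont continuous_const
    have hKcompact : IsCompact K := (isCompact_sphere 0 1).inter_left hKcl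
    have hmemK : ∀ z : Fin N → ℝ, A.mulVec z = 0 → z ≠ 0 → (‖z‖⁻¹ • z) ∈ K := by
      intro z hz hzne
      have hn : ‖z‖ ≠ 0 := norm_ne_zero_iff.2 hzne
      constructor
      · show A.mulVec _ = 0
        rw [Matrix.mulVec_smul, hz, smul_zero]
      · rw [mem_sphere_zero_iff_norm, norm_smul, norm_inv, norm_norm, inv_mul_cancel₀ hn]
    have hKne : K.Nonempty := ⟨_, hmemK z₀ hz₀A hz₀ne⟩
    have hposK : ∀ S : Finset (Fin N), S.card ≤ k → ∀ w ∈ K,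
        0 < ∑ i ∈ Sᶜ, phi p (w i) := by
      intro S hS w hw
      have hwne : w ≠ 0 := by
        intro h
        have := hw.2
        rw [h, mem_sphere_zero_iff_norm] at this
        simp at this
      have hcard := hmin w hw.1 hwne
      obtain ⟨i, hi, hiS⟩ := supp_exists (z := w) S (by omega)
      have hsum := Finset.single_le_sum (f := fun j => phi p (w j))
        (fun j _ => phi_nonneg p (w j)) (Finset.mem_compl.2 hiS)
      exact lt_of_lt_of_le (phi_pos p hi) hsum
    have hδex : ∀ S : Finset (Fin N), ∃ δ : ℝ, 0 < δ ∧
        (S.card ≤ k → ∀ w ∈ K, δ ≤ ∑ i ∈ Sᶜ, phi p (w i)) := by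
      intro S
      by_cases hS : S.card ≤ k
      · have hcont : ContinuousOn (fun w : Fin N → ℝ => ∑ i ∈ Sᶜ, phi p (w i)) K := by
          have hc : Continuous fun w : Fin N → ℝ => ∑ i ∈ Sᶜ, |w i| ^ p :=
            continuous_finset_sum _ fun i _ =>
              ((continuous_apply i).abs.rpow_const fun z => Or.inr hp0.le)
          simp_rw [phi_eq hpne]
          exact hc.continuousOn
        obtain ⟨w₀, hw₀K, hw₀min⟩ := hKcompact.exists_isMinOn hKne hcont
        exact ⟨_, hposK S hS w₀ hw₀K, fun _ w hw => hw₀min hw⟩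
      · exact ⟨1, one_pos, fun h => absurd h hS⟩
    choose δf hδpos hδle using hδex
    set δ : ℝ := Finset.univ.inf' Finset.univ_nonempty δf with hδdef
    have hδ0 : 0 < δ := by
      rw [hδdef, Finset.lt_inf'_iff]
      exact fun S _ => hδpos S
    have hδleS : ∀ S : Finset (Fin N), δ ≤ δf S :=
      fun S => Finset.inf'_le _ (Finset.mem_univ S)
    refine ⟨(N : ℝ) / δ, ?_⟩
    intro S hS z hz
    rcases eq_or_ne z 0 with rfl | hzne
    · simp [phi]
    · have hc0 : 0 < ‖z‖ := norm_pos_iff.2 hzne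
      set w : Fin N → ℝ := ‖z‖⁻¹ • z with hwdef
      have hwK : w ∈ K := hmemK z hz hzne
      have hzi : ∀ i, z i = ‖z‖ * w i := by
        intro i
        simp only [hwdef, Pi.smul_apply, smul_eq_mul]
        field_simp
      have hphi : ∀ i, phi p (z i) = |‖z‖| ^ p * phi p (w i) := fun i => by
        rw [hzi i]; exact phi_smul p (ne_of_gt hc0) _
      have hcp : 0 < |‖z‖| ^ p := Real.rpow_pos_of_pos (abs_pos.2 hc0.ne') p
      have hw1 : ∀ i, |w i| ≤ 1 := by
        intro i
        have h1 := norm_le_pi_norm w i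
        have h2 : ‖w‖ = 1 := mem_sphere_zero_iff_norm.1 hwK.2
        rw [Real.norm_eq_abs] at h1
        rw [h2] at h1
        exact h1
      have hnum : ∑ i ∈ S, phi p (w i) ≤ (N : ℝ) := by
        calc ∑ i ∈ S, phi p (w i) ≤ ∑ i ∈ S, 1 :=
              Finset.sum_le_sum fun i _ => phi_le_one hp.1 (hw1 i)
          _ = (S.card : ℝ) := by simp
          _ ≤ (N : ℝ) := by
              have := Finset.card_le_univ S
              simp only [Finset.card_univ, Fintype.card_fin] at this
              exact_mod_cast this
      have hden : δ ≤ ∑ i ∈ Sᶜ, phi p (w i) :=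
        le_trans (hδleS S) (hδle S hS w hwK)
      have hN0 : (0 : ℝ) ≤ (N : ℝ) := Nat.cast_nonneg N
      simp only [hphi, ← Finset.mul_sum]
      calc |‖z‖| ^ p * ∑ i ∈ S, phi p (w i) ≤ |‖z‖| ^ p * (N : ℝ) :=
            mul_le_mul_of_nonneg_left hnum hcp.le
        _ = (N : ℝ) / δ * (|‖z‖| ^ p * δ) := by field_simp
        _ ≤ (N : ℝ) / δ * (|‖z‖| ^ p * ∑ i ∈ Sᶜ, phi p (w i)) := by
            apply mul_le_mul_of_nonneg_left _ (div_nonneg hN0 hδ0.le)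
            exact mul_le_mul_of_nonneg_left hden hcp.le
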